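/- Every finite graph G with mad(G) < 17/5 contains (i) a vertex of degree at most 2, or (ii) a vertex of degree 3 with at least two neighbors of degree 3, or (iii) a vertex of degree 4 with four neighbors of degree 3. -/
import Mathlib


variable {V : Type} [Fintype V] [DecidableEq V]

/-- `mad(G) < q`: every nonempty subgraph `H` of `G` satisfies `2|E(H)| < q·|V(H)|`
(it suffices to consider induced subgraphs, and `2|E(H)|` is counted here as the
number of ordered adjacent pairs inside the vertex set `s` of `H`). -/
def MadLT (G : SimpleGraph V) [DecidableRel G.Adj] (q : ℚ) : Prop :=
  ∀ s : Finset V, s.Nonempty →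
    ((((s ×ˢ s).filter fun p => G.Adj p.1 p.2).card : ℚ) < q * s.card)

/-- discharging transfer: `u` sends `1/5` (scaled to `1`) to `v` if `u` has degree ≥ 4,
`v` has degree 3, and they are adjacent. -/
def dtrans (G : SimpleGraph V) [DecidableRel G.Adj] (u v : V) : ℤ :=
  if G.Adj v u ∧ 4 ≤ G.degree u ∧ G.degree v = 3 then 1 else 0

lemma dtrans_out (G : SimpleGraph V) [DecidableRel G.Adj] (v : V) :
    (∑ u, dtrans G v u) =
      (((G.neighborFinset v).filter fun u => 4 ≤ G.degree v ∧ G.degree u = 3).card : ℤ) := by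
  have h : ((G.neighborFinset v).filter fun u => 4 ≤ G.degree v ∧ G.degree u = 3)
      = Finset.univ.filter fun u => G.Adj u v ∧ 4 ≤ G.degree v ∧ G.degree u = 3 := by
    ext u
    simp [G.adj_comm]
  rw [h, ← Finset.sum_boole]
  simp [dtrans]

lemma dtrans_in (G : SimpleGraph V) [DecidableRel G.Adj] (v : V) :
    (∑ u, dtrans G u v) =
      (((G.neighborFinset v).filter fun u => 4 ≤ G.degree u ∧ G.degree v = 3).card : ℤ) := by
  have h : ((G.neighborFinset v).filter fun u => 4 ≤ G.degree u ∧ G.degree v = 3)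
      = Finset.univ.filter fun u => G.Adj v u ∧ 4 ≤ G.degree u ∧ G.degree v = 3 := by
    ext u
    simp
  rw [h, ← Finset.sum_boole]
  simp [dtrans]

lemma dtrans_key (G : SimpleGraph V) [DecidableRel G.Adj]
    (h1 : ∀ v, 2 < G.degree v)
    (h2 : ∀ v, G.degree v = 3 →
      ((G.neighborFinset v).filter fun w => G.degree w = 3).card < 2)
    (h3 : ∀ v, G.degree v = 4 →
      ((G.neighborFinset v).filter fun w => G.degree w = 3).card ≠ 4)
    (v : V) :
    17 ≤ 5 * (G.degree v : ℤ) + (∑ u, dtrans G u v) - (∑ u, dtrans G v u) := by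
  rw [dtrans_out, dtrans_in]
  rcases lt_trichotomy (G.degree v) 4 with hd | hd | hd
  · -- degree 3
    have hd3 : G.degree v = 3 := by have := h1 v; omega
    have hout : ((G.neighborFinset v).filter fun u => 4 ≤ G.degree v ∧ G.degree u = 3) = ∅ := by
      apply Finset.filter_false_of_mem
      intro u _
      omega
    have hout0 : ((G.neighborFinset v).filter fun u => 4 ≤ G.degree v ∧ G.degree u = 3).card = 0 := by
      rw [hout]; rfl
    have hsplit :
        ((G.neighborFinset v).filter fun u => 4 ≤ G.degree u ∧ G.degree v = 3).card
        + ((G.neighborFinset v).filter fun u => ¬(4 ≤ G.degree u ∧ G.degree v = 3)).card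
        = G.degree v := by
      rw [Finset.card_filter_add_card_filter_not, SimpleGraph.card_neighborFinset_eq_degree]
    have hsub : ((G.neighborFinset v).filter fun u => ¬(4 ≤ G.degree u ∧ G.degree v = 3))
        ⊆ ((G.neighborFinset v).filter fun w => G.degree w = 3) := by
      intro u hu
      simp only [Finset.mem_filter] at hu ⊢
      have := h1 u
      refine ⟨hu.1, ?_⟩
      omega
    have hcard := Finset.card_le_card hsub
    have := h2 v hd3
    omega
  · -- degree 4
    have hin : ((G.neighborFinset v).filter fun u => 4 ≤ G.degree u ∧ G.degree v = 3) = ∅ := by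
      apply Finset.filter_false_of_mem
      intro u _
      omega
    have hin0 : ((G.neighborFinset v).filter fun u => 4 ≤ G.degree u ∧ G.degree v = 3).card = 0 := by
      rw [hin]; rfl
    have hsub : ((G.neighborFinset v).filter fun u => 4 ≤ G.degree v ∧ G.degree u = 3)
        ⊆ ((G.neighborFinset v).filter fun w => G.degree w = 3) := by
      intro u hu
      simp only [Finset.mem_filter] at hu ⊢
      exact ⟨hu.1, hu.2.2⟩
    have hcard := Finset.card_le_card hsub
    have hb : ((G.neighborFinset v).filter fun w => G.degree w = 3).card ≤ G.degree v := by
      rw [← SimpleGraph.card_neighborFinset_eq_degree]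
      exact Finset.card_le_card (Finset.filter_subset _ _)
    have := h3 v hd
    omega
  · -- degree ≥ 5
    have hb : ((G.neighborFinset v).filter fun u => 4 ≤ G.degree v ∧ G.degree u = 3).card
        ≤ G.degree v := by
      rw [← SimpleGraph.card_neighborFinset_eq_degree]
      exact Finset.card_le_card (Finset.filter_subset _ _)
    have : (0:ℤ) ≤ ((G.neighborFinset v).filter fun u => 4 ≤ G.degree u ∧ G.degree v = 3).card :=
      Int.ofNat_nonneg _
    omega

/-- Every finite (nonempty) graph `G` with `mad(G) < 17/5` contains
(i) a vertex of degree at most 2, or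
(ii) a vertex of degree 3 with at least two neighbors of degree 3, or
(iii) a vertex of degree 4 with four neighbors of degree 3. -/
theorem exists_config_of_mad_lt_seventeen_fifths
    (G : SimpleGraph V) [DecidableRel G.Adj] [Nonempty V]
    (hmad : MadLT G (17/5)) :
    (∃ v, G.degree v ≤ 2) ∨
    (∃ v, G.degree v = 3 ∧
      2 ≤ ((G.neighborFinset v).filter fun w => G.degree w = 3).card) ∨
    (∃ v, G.degree v = 4 ∧
      ((G.neighborFinset v).filter fun w => G.degree w = 3).card = 4) := by
  by_contra hcon
  push_neg at hcon
  obtain ⟨h1, h2, h3⟩ := hcon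
  have key := dtrans_key G h1 h2 h3
  have hsum : 17 * (Fintype.card V : ℤ) ≤ 5 * ∑ v, (G.degree v : ℤ) := by
    calc 17 * (Fintype.card V : ℤ) = ∑ _v : V, (17:ℤ) := by
          simp [Finset.sum_const, mul_comm]
      _ ≤ ∑ v, (5 * (G.degree v : ℤ) + (∑ u, dtrans G u v) - (∑ u, dtrans G v u)) :=
          Finset.sum_le_sum fun v _ => key v
      _ = 5 * ∑ v, (G.degree v : ℤ) := by
          rw [Finset.sum_sub_distrib, Finset.sum_add_distrib]
          have hcomm : (∑ v : V, ∑ u : V, dtrans G u v) = ∑ v : V, ∑ u : V, dtrans G v u :=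
            Finset.sum_comm
          rw [hcomm, add_sub_cancel_right, Finset.mul_sum]
  have hpairs : (((Finset.univ ×ˢ Finset.univ).filter fun p => G.Adj p.1 p.2).card)
      = ∑ v, G.degree v := by
    rw [Finset.card_filter, Finset.sum_product]
    simp only [SimpleGraph.degree, SimpleGraph.neighborFinset_eq_filter, Finset.card_filter]
  have hm := hmad Finset.univ Finset.univ_nonempty
  rw [hpairs] at hm
  have hc : (Finset.univ : Finset V).card = Fintype.card V := rfl
  rw [hc] at hm
  have hQ : (17:ℚ) * (Fintype.card V : ℚ) ≤ 5 * ∑ v, (G.degree v : ℚ) := by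
    exact_mod_cast hsum
  push_cast at hm
  linarith
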